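/- Let d ≥ 1, κ ≥ 2d, and let α₁, α₂ : ℝ^{2d} → ℂ be measurable with ‖α_i‖_{A^{κ,2}} < ∞, and let ρ_i(x) := ∫_{ℝ^d} |α_i(x,v)|² dv. Then sup_{x ∈ ℝ^d} |ρ₁(x) − ρ₂(x)| ≤ A(κ,d) (‖α₁‖_{A^{κ,2}} + ‖α₂‖_{A^{κ,2}}) ‖α₁ − α₂‖_{A^{κ,2}}, where A(κ,d) := inf_{R>0} (1+R)^κ/(ω_d R^d) and ω_d is the Lebesgue volume of the unit ball in ℝ^d. -/

import Mathlib

open MeasureTheory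
open scoped ENNReal NNReal

/-- `ℝ^d` as a Euclidean space. -/
abbrev E (d : ℕ) : Type := EuclideanSpace ℝ (Fin d)

/-- The `A^{κ,p}` norm: `sup_{R ≥ 0} (1+R)^{-κ/p} (∫ sup_{|z̄| ≤ R} ‖f(z+z̄)‖^p dz)^{1/p}`. -/
noncomputable def Anorm {G F : Type*} [NormedAddCommGroup G] [MeasureSpace G]
    [NormedAddCommGroup F] (κ p : ℝ) (f : G → F) : ℝ≥0∞ :=
  ⨆ R : NNReal, (ENNReal.ofReal (1 + (R : ℝ))) ^ (-(κ / p)) *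
    (∫⁻ z, ⨆ w ∈ Metric.closedBall (0 : G) (R : ℝ),
      ENNReal.ofReal (‖f (z + w)‖ ^ p)) ^ (1 / p)

/-- The constant `A(a,d) = inf_{R>0} (1+R)^a / (ω_d R^d)`, where `ω_d` is the Lebesgue
volume of the unit ball in `ℝ^d`. -/
noncomputable def Aconst (d : ℕ) (a : ℝ) : ℝ :=
  ⨅ R : {R : ℝ // 0 < R},
    (1 + R.1) ^ a / ((volume (Metric.ball (0 : E d) 1)).toReal * R.1 ^ (d : ℝ))

lemma rpow_two' (x : ℝ) : x ^ (2:ℝ) = x ^ 2 := by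
  rw [show (2:ℝ) = ((2:ℕ):ℝ) by norm_num, Real.rpow_natCast]

lemma sup_integral_le {d : ℕ} (κ : ℝ) (α : E d × E d → ℂ) (R : ℝ≥0) :
    (∫⁻ z : E d × E d, ⨆ w ∈ Metric.closedBall (0 : E d × E d) (R : ℝ),
      ENNReal.ofReal (‖α (z + w)‖ ^ (2:ℝ))) ≤
    (ENNReal.ofReal (1 + (R:ℝ))) ^ κ * (Anorm κ 2 α) ^ (2:ℝ) := by
  set S := ∫⁻ z : E d × E d, ⨆ w ∈ Metric.closedBall (0 : E d × E d) (R : ℝ),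
      ENNReal.ofReal (‖α (z + w)‖ ^ (2:ℝ)) with hS
  have h1 : (ENNReal.ofReal (1 + (R : ℝ))) ^ (-(κ / 2)) * S ^ (1 / (2:ℝ)) ≤ Anorm κ 2 α := by
    exact le_iSup (fun R : ℝ≥0 => (ENNReal.ofReal (1 + (R : ℝ))) ^ (-(κ / 2)) *
      (∫⁻ z : E d × E d, ⨆ w ∈ Metric.closedBall (0 : E d × E d) (R : ℝ),
        ENNReal.ofReal (‖α (z + w)‖ ^ (2:ℝ))) ^ (1 / (2:ℝ))) R
  have hb0 : (ENNReal.ofReal (1 + (R : ℝ))) ≠ 0 := by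
    simp [ENNReal.ofReal_eq_zero]
    positivity
  have hbt : (ENNReal.ofReal (1 + (R : ℝ))) ≠ ⊤ := ENNReal.ofReal_ne_top
  set b := ENNReal.ofReal (1 + (R : ℝ)) with hb
  have hB0 : b ^ (κ/2) ≠ 0 := by
    simp [ENNReal.rpow_eq_zero_iff, hb0, hbt]
  have hBt : b ^ (κ/2) ≠ ⊤ := by
    simp [ENNReal.rpow_eq_top_iff, hb0, hbt]
  have h2 : S ^ (1 / (2:ℝ)) ≤ b ^ (κ/2) * Anorm κ 2 α := by
    have := mul_le_mul_right h1 (b ^ (κ/2))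
    rwa [← mul_assoc, ENNReal.rpow_neg, ENNReal.mul_inv_cancel hB0 hBt, one_mul] at this
  have h3 : (S ^ (1 / (2:ℝ))) ^ (2:ℝ) ≤ (b ^ (κ/2) * Anorm κ 2 α) ^ (2:ℝ) :=
    ENNReal.rpow_le_rpow h2 (by norm_num)
  calc S = (S ^ (1 / (2:ℝ))) ^ (2:ℝ) := by
            rw [← ENNReal.rpow_mul]
            norm_num
    _ ≤ (b ^ (κ/2) * Anorm κ 2 α) ^ (2:ℝ) := h3
    _ = b ^ κ * (Anorm κ 2 α) ^ (2:ℝ) := by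
          rw [ENNReal.mul_rpow_of_nonneg _ _ (by norm_num), ← ENNReal.rpow_mul]
          norm_num

lemma slice_le_sup {d : ℕ} (α : E d × E d → ℂ) (hm : Measurable α) (x : E d)
    (R : ℝ) (hR : 0 ≤ R) :
    volume (Metric.closedBall x R) * ∫⁻ v, ENNReal.ofReal (‖α (x, v)‖ ^ (2:ℝ)) ≤
    ∫⁻ z : E d × E d, ⨆ w ∈ Metric.closedBall (0 : E d × E d) R,
      ENNReal.ofReal (‖α (z + w)‖ ^ (2:ℝ)) := by
  have hmv : Measurable fun v : E d => ENNReal.ofReal (‖α (x, v)‖ ^ (2:ℝ)) := by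
    simp_rw [rpow_two']
    exact (((hm.comp measurable_prodMk_left).norm.pow_const 2)).ennreal_ofReal
  have key : volume (Metric.closedBall x R) * ∫⁻ v, ENNReal.ofReal (‖α (x, v)‖ ^ (2:ℝ))
      = ∫⁻ z : E d × E d, (Metric.closedBall x R).indicator (1 : E d → ℝ≥0∞) z.1 *
          ENNReal.ofReal (‖α (x, z.2)‖ ^ (2:ℝ)) := by
    rw [Measure.volume_eq_prod, lintegral_prod_mul
      ((measurable_one.indicator measurableSet_closedBall)).aemeasurable hmv.aemeasurable,
      lintegral_indicator_one measurableSet_closedBall]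
  rw [key]
  refine lintegral_mono fun z => ?_
  by_cases hz : z.1 ∈ Metric.closedBall x R
  · rw [Set.indicator_of_mem hz, Pi.one_apply, one_mul]
    have hw : ((x - z.1, (0 : E d)) : E d × E d) ∈ Metric.closedBall (0 : E d × E d) R := by
      rw [Metric.mem_closedBall, dist_zero_right, Prod.norm_def]
      simp only [norm_zero]
      rw [Metric.mem_closedBall] at hz
      rw [max_le_iff]
      constructor
      · rw [← dist_eq_norm, dist_comm]
        exact hz
      · exact hR
    have hle := le_biSup (fun w : E d × E d => ENNReal.ofReal (‖α (z + w)‖ ^ (2:ℝ))) hw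
    have hzw : z + ((x - z.1, (0 : E d)) : E d × E d) = (x, z.2) := by
      ext <;> simp
    rwa [hzw] at hle
  · rw [Set.indicator_of_notMem hz, zero_mul]
    exact zero_le

lemma L_bound {d : ℕ} (κ : ℝ) (α : E d × E d → ℂ) (hm : Measurable α)
    (x : E d) (R : ℝ) (hR : 0 < R) :
    ∫⁻ v, ENNReal.ofReal (‖α (x, v)‖ ^ (2:ℝ)) ≤
      ENNReal.ofReal ((1 + R) ^ κ /
        ((volume (Metric.ball (0 : E d) 1)).toReal * R ^ (d:ℝ))) * (Anorm κ 2 α) ^ (2:ℝ) := by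
  set ω := (volume (Metric.ball (0 : E d) 1)).toReal with hω
  have hΩt : volume (Metric.ball (0 : E d) 1) ≠ ⊤ := measure_ball_lt_top.ne
  have hΩ0 : volume (Metric.ball (0 : E d) 1) ≠ 0 :=
    (Metric.measure_ball_pos volume (0 : E d) one_pos).ne'
  have hωpos : 0 < ω := ENNReal.toReal_pos hΩ0 hΩt
  have hden : 0 < ω * R ^ (d:ℝ) := by positivity
  set D := ENNReal.ofReal (ω * R ^ (d:ℝ)) with hD
  have hD0 : D ≠ 0 := by
    simp only [hD, ne_eq, ENNReal.ofReal_eq_zero, not_le]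
    exact hden
  have hDt : D ≠ ⊤ := ENNReal.ofReal_ne_top
  have hDball : D = volume (Metric.closedBall x R) := by
    rw [Measure.addHaar_closedBall volume x hR.le, finrank_euclideanSpace_fin,
      ← ENNReal.ofReal_toReal hΩt, ← ENNReal.ofReal_mul (by positivity), hD]
    congr 1
    rw [← Real.rpow_natCast R d]
    ring
  have h1 := slice_le_sup α hm x R hR.le
  have h2 := sup_integral_le κ α R.toNNReal
  rw [Real.coe_toNNReal R hR.le] at h2
  rw [← hDball] at h1
  have h3 : D * ∫⁻ v, ENNReal.ofReal (‖α (x, v)‖ ^ (2:ℝ)) ≤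
      (ENNReal.ofReal (1 + R)) ^ κ * (Anorm κ 2 α) ^ (2:ℝ) := h1.trans h2
  calc ∫⁻ v, ENNReal.ofReal (‖α (x, v)‖ ^ (2:ℝ))
      = D⁻¹ * (D * ∫⁻ v, ENNReal.ofReal (‖α (x, v)‖ ^ (2:ℝ))) := by
        rw [← mul_assoc, ENNReal.inv_mul_cancel hD0 hDt, one_mul]
    _ ≤ D⁻¹ * ((ENNReal.ofReal (1 + R)) ^ κ * (Anorm κ 2 α) ^ (2:ℝ)) :=
        mul_le_mul_right h3 _
    _ = ENNReal.ofReal ((1 + R) ^ κ / (ω * R ^ (d:ℝ))) * (Anorm κ 2 α) ^ (2:ℝ) := by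
        rw [ENNReal.ofReal_div_of_pos hden, ENNReal.ofReal_rpow_of_pos (by linarith),
          div_eq_mul_inv, ← hD]
        ring

/-- Pointwise Lipschitz estimate for the density:
`|ρ₁(x) − ρ₂(x)| ≤ A(κ,d)(‖α₁‖_{A^{κ,2}} + ‖α₂‖_{A^{κ,2}}) ‖α₁ − α₂‖_{A^{κ,2}}`. -/
theorem statement12 (d : ℕ) (hd : 1 ≤ d) (κ : ℝ) (hκ : 2 * (d : ℝ) ≤ κ)
    (α₁ α₂ : E d × E d → ℂ) (hm₁ : Measurable α₁) (hm₂ : Measurable α₂)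
    (hf₁ : Anorm κ 2 α₁ < ⊤) (hf₂ : Anorm κ 2 α₂ < ⊤) (x : E d) :
    ENNReal.ofReal |(∫ v : E d, ‖α₁ (x, v)‖ ^ 2) - ∫ v : E d, ‖α₂ (x, v)‖ ^ 2| ≤
      ENNReal.ofReal (Aconst d κ) * (Anorm κ 2 α₁ + Anorm κ 2 α₂) *
        Anorm κ 2 (α₁ - α₂) := by
  haveI : Nonempty {R : ℝ // 0 < R} := ⟨⟨1, one_pos⟩⟩
  set ω := (volume (Metric.ball (0 : E d) 1)).toReal with hω
  have hΩt : volume (Metric.ball (0 : E d) 1) ≠ ⊤ := measure_ball_lt_top.ne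
  have hΩ0 : volume (Metric.ball (0 : E d) 1) ≠ 0 :=
    (Metric.measure_ball_pos volume (0 : E d) one_pos).ne'
  have hωpos : 0 < ω := ENNReal.toReal_pos hΩ0 hΩt
  have hm₁₂ : Measurable (α₁ - α₂) := hm₁.sub hm₂
  set N₁ := Anorm κ 2 α₁ with hN₁
  set N₂ := Anorm κ 2 α₂ with hN₂
  set N₁₂ := Anorm κ 2 (α₁ - α₂) with hN₁₂
  set c : {R : ℝ // 0 < R} → ℝ := fun R => (1 + R.1) ^ κ / (ω * R.1 ^ (d:ℝ)) with hc
  have hcpos : ∀ R : {R : ℝ // 0 < R}, 0 < c R := fun R =>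
    div_pos (Real.rpow_pos_of_pos (by linarith [R.2]) κ)
      (mul_pos hωpos (Real.rpow_pos_of_pos R.2 _))
  -- finiteness of slice integrals
  have hfin : ∀ (α : E d × E d → ℂ), Measurable α → Anorm κ 2 α < ⊤ →
      (∫⁻ v, ENNReal.ofReal (‖α (x, v)‖ ^ (2:ℝ))) < ⊤ := by
    intro α hm hN
    refine lt_of_le_of_lt (L_bound κ α hm x 1 one_pos) ?_
    exact ENNReal.mul_lt_top ENNReal.ofReal_lt_top
      (ENNReal.rpow_lt_top_of_nonneg (by norm_num) hN.ne)
  -- integrability of slice functions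
  have hint : ∀ (α : E d × E d → ℂ), Measurable α →
      (∫⁻ v, ENNReal.ofReal (‖α (x, v)‖ ^ (2:ℝ))) < ⊤ →
      Integrable (fun v : E d => ‖α (x, v)‖ ^ 2) := by
    intro α hm hLfin
    have hmeas : Measurable fun v : E d => ‖α (x, v)‖ ^ 2 :=
      (hm.comp measurable_prodMk_left).norm.pow_const 2
    refine ⟨hmeas.aestronglyMeasurable, ?_⟩
    rw [hasFiniteIntegral_iff_norm]
    have e : ∀ v : E d, ENNReal.ofReal ‖‖α (x, v)‖ ^ 2‖ =
        ENNReal.ofReal (‖α (x, v)‖ ^ (2:ℝ)) := fun v => by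
      rw [Real.norm_of_nonneg (by positivity), rpow_two']
    simp_rw [e]
    exact hLfin
  have hI₁ : Integrable (fun v : E d => ‖α₁ (x, v)‖ ^ 2) :=
    hint α₁ hm₁ (hfin α₁ hm₁ hf₁)
  have hI₂ : Integrable (fun v : E d => ‖α₂ (x, v)‖ ^ 2) :=
    hint α₂ hm₂ (hfin α₂ hm₂ hf₂)
  -- pointwise bound
  have hpt : ∀ v : E d, ENNReal.ofReal |‖α₁ (x, v)‖ ^ 2 - ‖α₂ (x, v)‖ ^ 2| ≤
      ENNReal.ofReal ‖(α₁ - α₂) (x, v)‖ *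
        (ENNReal.ofReal ‖α₁ (x, v)‖ + ENNReal.ofReal ‖α₂ (x, v)‖) := by
    intro v
    have h1 : |‖α₁ (x, v)‖ ^ 2 - ‖α₂ (x, v)‖ ^ 2| ≤
        ‖(α₁ - α₂) (x, v)‖ * (‖α₁ (x, v)‖ + ‖α₂ (x, v)‖) := by
      have e : (α₁ - α₂) (x, v) = α₁ (x, v) - α₂ (x, v) := rfl
      rw [sq_sub_sq, abs_mul, e,
        abs_of_nonneg (by positivity : (0:ℝ) ≤ ‖α₁ (x, v)‖ + ‖α₂ (x, v)‖), mul_comm]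
      exact mul_le_mul_of_nonneg_right (abs_norm_sub_norm_le _ _) (by positivity)
    refine (ENNReal.ofReal_le_ofReal h1).trans_eq ?_
    rw [ENNReal.ofReal_mul (norm_nonneg _),
      ENNReal.ofReal_add (norm_nonneg _) (norm_nonneg _)]
  -- Cauchy-Schwarz
  have hCS : ∀ (β : E d × E d → ℂ), Measurable β →
      (∫⁻ v, ENNReal.ofReal ‖(α₁ - α₂) (x, v)‖ * ENNReal.ofReal ‖β (x, v)‖) ≤
      (∫⁻ v, ENNReal.ofReal (‖(α₁ - α₂) (x, v)‖ ^ (2:ℝ))) ^ (1/2:ℝ) *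
        (∫⁻ v, ENNReal.ofReal (‖β (x, v)‖ ^ (2:ℝ))) ^ (1/2:ℝ) := by
    intro β hmβ
    have hpq : Real.HolderConjugate 2 2 := Real.holderConjugate_iff.mpr ⟨one_lt_two, by norm_num⟩
    have hmf : Measurable fun v : E d => ENNReal.ofReal ‖(α₁ - α₂) (x, v)‖ :=
      (hm₁₂.comp measurable_prodMk_left).norm.ennreal_ofReal
    have hmg : Measurable fun v : E d => ENNReal.ofReal ‖β (x, v)‖ :=
      (hmβ.comp measurable_prodMk_left).norm.ennreal_ofReal
    have h := ENNReal.lintegral_mul_le_Lp_mul_Lq volume hpq hmf.aemeasurable hmg.aemeasurable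
    simp only [Pi.mul_apply] at h
    have e1 : ∀ v : E d, (ENNReal.ofReal ‖(α₁ - α₂) (x, v)‖) ^ (2:ℝ) =
        ENNReal.ofReal (‖(α₁ - α₂) (x, v)‖ ^ (2:ℝ)) := fun v =>
      ENNReal.ofReal_rpow_of_nonneg (norm_nonneg _) (by norm_num : (0:ℝ) ≤ 2)
    have e2 : ∀ v : E d, (ENNReal.ofReal ‖β (x, v)‖) ^ (2:ℝ) =
        ENNReal.ofReal (‖β (x, v)‖ ^ (2:ℝ)) := fun v =>
      ENNReal.ofReal_rpow_of_nonneg (norm_nonneg _) (by norm_num : (0:ℝ) ≤ 2)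
    simp only [e1, e2] at h
    exact h
  -- square root of the main bound
  have hsq : ∀ (α : E d × E d → ℂ), Measurable α → ∀ R : {R : ℝ // 0 < R},
      (∫⁻ v, ENNReal.ofReal (‖α (x, v)‖ ^ (2:ℝ))) ^ (1/2:ℝ) ≤
      (ENNReal.ofReal (c R)) ^ (1/2:ℝ) * Anorm κ 2 α := by
    intro α hm R
    have h := ENNReal.rpow_le_rpow (L_bound κ α hm x R.1 R.2) (by norm_num : (0:ℝ) ≤ 1/2)
    rwa [ENNReal.mul_rpow_of_nonneg _ _ (by norm_num : (0:ℝ) ≤ 1/2),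
      ← ENNReal.rpow_mul, show (2:ℝ) * (1/2) = 1 by norm_num, ENNReal.rpow_one] at h
  -- per-R bound
  have hstep : ∀ R : {R : ℝ // 0 < R},
      (∫⁻ v, ENNReal.ofReal (‖(α₁ - α₂) (x, v)‖ ^ (2:ℝ))) ^ (1/2:ℝ) *
        (∫⁻ v, ENNReal.ofReal (‖α₁ (x, v)‖ ^ (2:ℝ))) ^ (1/2:ℝ) +
      (∫⁻ v, ENNReal.ofReal (‖(α₁ - α₂) (x, v)‖ ^ (2:ℝ))) ^ (1/2:ℝ) *
        (∫⁻ v, ENNReal.ofReal (‖α₂ (x, v)‖ ^ (2:ℝ))) ^ (1/2:ℝ) ≤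
      ENNReal.ofReal (c R) * ((N₁ + N₂) * N₁₂) := by
    intro R
    set cc := ENNReal.ofReal (c R) with hcc
    have hcc0 : cc ≠ 0 := (ENNReal.ofReal_pos.mpr (hcpos R)).ne'
    have hcct : cc ≠ ⊤ := ENNReal.ofReal_ne_top
    have h12 := hsq (α₁ - α₂) hm₁₂ R
    have h1 := hsq α₁ hm₁ R
    have h2 := hsq α₂ hm₂ R
    calc (∫⁻ v, ENNReal.ofReal (‖(α₁ - α₂) (x, v)‖ ^ (2:ℝ))) ^ (1/2:ℝ) *
          (∫⁻ v, ENNReal.ofReal (‖α₁ (x, v)‖ ^ (2:ℝ))) ^ (1/2:ℝ) +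
        (∫⁻ v, ENNReal.ofReal (‖(α₁ - α₂) (x, v)‖ ^ (2:ℝ))) ^ (1/2:ℝ) *
          (∫⁻ v, ENNReal.ofReal (‖α₂ (x, v)‖ ^ (2:ℝ))) ^ (1/2:ℝ)
        ≤ (cc ^ (1/2:ℝ) * N₁₂) * (cc ^ (1/2:ℝ) * N₁) +
          (cc ^ (1/2:ℝ) * N₁₂) * (cc ^ (1/2:ℝ) * N₂) :=
          add_le_add (mul_le_mul' h12 h1) (mul_le_mul' h12 h2)
      _ = (cc ^ (1/2:ℝ) * cc ^ (1/2:ℝ)) * ((N₁ + N₂) * N₁₂) := by ring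
      _ = cc * ((N₁ + N₂) * N₁₂) := by
          rw [← ENNReal.rpow_add _ _ hcc0 hcct]
          norm_num
  -- assemble
  have main : ENNReal.ofReal |(∫ v : E d, ‖α₁ (x, v)‖ ^ 2) - ∫ v : E d, ‖α₂ (x, v)‖ ^ 2| ≤
      ⨅ R : {R : ℝ // 0 < R}, ENNReal.ofReal (c R) * ((N₁ + N₂) * N₁₂) := by
    refine le_iInf fun R => ?_
    refine le_trans ?_ (hstep R)
    have hmprod₁ : Measurable fun v : E d =>
        ENNReal.ofReal ‖(α₁ - α₂) (x, v)‖ * ENNReal.ofReal ‖α₁ (x, v)‖ :=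
      ((hm₁₂.comp measurable_prodMk_left).norm.ennreal_ofReal).mul
        ((hm₁.comp measurable_prodMk_left).norm.ennreal_ofReal)
    calc ENNReal.ofReal |(∫ v : E d, ‖α₁ (x, v)‖ ^ 2) - ∫ v : E d, ‖α₂ (x, v)‖ ^ 2|
        = ENNReal.ofReal |∫ v : E d, (‖α₁ (x, v)‖ ^ 2 - ‖α₂ (x, v)‖ ^ 2)| := by
          rw [integral_sub hI₁ hI₂]
      _ ≤ ENNReal.ofReal (∫ v : E d, |‖α₁ (x, v)‖ ^ 2 - ‖α₂ (x, v)‖ ^ 2|) := by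
          refine ENNReal.ofReal_le_ofReal ?_
          have := norm_integral_le_integral_norm
            (f := fun v : E d => ‖α₁ (x, v)‖ ^ 2 - ‖α₂ (x, v)‖ ^ 2) (μ := volume)
          simpa [Real.norm_eq_abs] using this
      _ = ∫⁻ v, ENNReal.ofReal |‖α₁ (x, v)‖ ^ 2 - ‖α₂ (x, v)‖ ^ 2| :=
          ofReal_integral_eq_lintegral_ofReal (hI₁.sub hI₂).abs
            (ae_of_all _ fun v => abs_nonneg _)
      _ ≤ ∫⁻ v, ENNReal.ofReal ‖(α₁ - α₂) (x, v)‖ *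
            (ENNReal.ofReal ‖α₁ (x, v)‖ + ENNReal.ofReal ‖α₂ (x, v)‖) :=
          lintegral_mono hpt
      _ = (∫⁻ v, ENNReal.ofReal ‖(α₁ - α₂) (x, v)‖ * ENNReal.ofReal ‖α₁ (x, v)‖) +
          (∫⁻ v, ENNReal.ofReal ‖(α₁ - α₂) (x, v)‖ * ENNReal.ofReal ‖α₂ (x, v)‖) := by
          simp_rw [mul_add]
          rw [lintegral_add_left hmprod₁]
      _ ≤ (∫⁻ v, ENNReal.ofReal (‖(α₁ - α₂) (x, v)‖ ^ (2:ℝ))) ^ (1/2:ℝ) *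
            (∫⁻ v, ENNReal.ofReal (‖α₁ (x, v)‖ ^ (2:ℝ))) ^ (1/2:ℝ) +
          (∫⁻ v, ENNReal.ofReal (‖(α₁ - α₂) (x, v)‖ ^ (2:ℝ))) ^ (1/2:ℝ) *
            (∫⁻ v, ENNReal.ofReal (‖α₂ (x, v)‖ ^ (2:ℝ))) ^ (1/2:ℝ) :=
          add_le_add (hCS α₁ hm₁) (hCS α₂ hm₂)
  rw [mul_assoc]
  by_cases hMtop : (N₁ + N₂) * N₁₂ = ⊤
  · have hA : (1:ℝ)/ω ≤ Aconst d κ := by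
      refine le_ciInf fun R => ?_
      have hdκ : (d:ℝ) ≤ κ := by
        have : (0:ℝ) ≤ d := Nat.cast_nonneg d
        linarith
      have h1 : R.1 ^ (d:ℝ) ≤ (1 + R.1) ^ κ := by
        calc R.1 ^ (d:ℝ) ≤ (1 + R.1) ^ (d:ℝ) :=
              Real.rpow_le_rpow R.2.le (by linarith [R.2]) (by positivity)
          _ ≤ (1 + R.1) ^ κ :=
              Real.rpow_le_rpow_of_exponent_le (by linarith [R.2]) hdκ
      rw [div_le_div_iff₀ hωpos (mul_pos hωpos (Real.rpow_pos_of_pos R.2 _))]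
      calc 1 * (ω * R.1 ^ (d:ℝ)) = R.1 ^ (d:ℝ) * ω := by ring
        _ ≤ (1 + R.1) ^ κ * ω := mul_le_mul_of_nonneg_right h1 hωpos.le
    have hA0 : ENNReal.ofReal (Aconst d κ) ≠ 0 := by
      refine (ENNReal.ofReal_pos.mpr ?_).ne'
      calc (0:ℝ) < 1/ω := by positivity
        _ ≤ Aconst d κ := hA
    rw [hMtop, ENNReal.mul_top hA0]
    exact le_top
  · refine main.trans ?_
    have hAc : Aconst d κ = ⨅ R : {R : ℝ // 0 < R}, c R := rfl
    rw [hAc, ENNReal.ofReal_iInf, ENNReal.iInf_mul (fun h _ => absurd h hMtop)]
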